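/- With the definitions of C, O_ℓ, U_ℓ, D and T made from the run of BinarySearchMechanism(N \ {i}, M, ψ) with fixed rounds r_{−i}, if the valuation v_i of bidder i is subadditive, then for every set S ⊆ S_i*, the following holds in the actual mechanism BinarySearchMechanism(N, M, ψ) with bidder i included: E_{r*, r_i}[Utility_i | r_{−i}] ≥ (1/(β+1)²)·(v_i(S \ T) − q(S \ T)), where Utility_i refers to the FixedPriceAuction that produced the final allocation (Utility_i = 0 if bidder i does not participate in it) and q(S \ T) = Σ_{e∈S\T} q_e. -/

import Mathlib

open Finset

variable {ι : Type} [Fintype ι] [DecidableEq ι] {B : Type} [DecidableEq B]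

/-- Sum of the prices of the items in `S`. -/
def priceOf (p : ι → ℝ) (S : Finset ι) : ℝ := ∑ e ∈ S, p e

/-- A (normalized, monotone) valuation. -/
def IsValuation (v : Finset ι → ℝ) : Prop :=
  v ∅ = 0 ∧ ∀ S T : Finset ι, S ⊆ T → v S ≤ v T

/-- A subadditive set function. -/
def SubadditiveVal (v : Finset ι → ℝ) : Prop :=
  ∀ S T : Finset ι, v (S ∪ T) ≤ v S + v T

/-- `D` is a demand oracle for valuation `v` at prices `p`: on any set `R` of available
items it returns a subset of `R` maximizing utility. -/
def IsDemandOracle (v : Finset ι → ℝ) (p : ι → ℝ) (D : Finset ι → Finset ι) : Prop :=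
  ∀ R : Finset ι, D R ⊆ R ∧ ∀ T ⊆ R, v T - priceOf p T ≤ v (D R) - priceOf p (D R)

/-- The bundle received by bidder `i` in the fixed price auction processing the ordered
list `L` of bidders with available items `R`, where bidder `j` uses demand oracle `Dem j`. -/
def FPAalloc (Dem : B → Finset ι → Finset ι) : List B → Finset ι → B → Finset ι
  | [], _, _ => ∅
  | j :: L, R, i => if i = j then Dem j R else FPAalloc Dem L (R \ Dem j R) i

/-- The set of items allocated (to some bidder) in the fixed price auction. -/
def FPAsold (Dem : B → Finset ι → Finset ι) : List B → Finset ι → Finset ι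
  | [], _ => ∅
  | j :: L, R => Dem j R ∪ FPAsold Dem L (R \ Dem j R)

/-- The candidate price set `B = {0} ∪ {2^(j-K)·ψ : j = 0,…,K-1}` where `K = 3⌈log₂ m⌉`. -/
def candB (m : ℕ) (ψ : ℝ) : Set ℝ :=
  insert 0 {x : ℝ | ∃ j < 3 * Nat.clog 2 m, x = 2 ^ j * ψ / 2 ^ (3 * Nat.clog 2 m)}

/-- Bidder with valuation `v` satisfies the `α`-price guarantee on `U`. -/
def PriceGuarantee (v : Finset ι → ℝ) (U : Finset ι) (α : ℝ) : Prop :=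
  ∃ (lam : Finset ι → ℝ) (q : ι → ℝ),
    (∀ S, 0 ≤ lam S) ∧ (∑ S ∈ U.powerset, lam S = 1) ∧ (∀ e ∈ U, 0 ≤ q e) ∧
    ∀ T ⊆ U, (1 / α) * v U - priceOf q T ≤
      ∑ S ∈ U.powerset, lam S * (v (S \ T) - priceOf q S)

/-- The group of bidders participating in round `ℓ` (in the order of `N`). -/
def BSMgroup (N : List B) (r : B → ℕ) (ℓ : ℕ) : List B := N.filter fun i => r i = ℓ

/-- The offset (into the sorted vector `b` of `2^β` candidate prices) of the block of
remaining candidate prices of each item at the beginning of round `ℓ` (rounds are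
`0`-indexed: the binary search rounds are `0,…,β-1` and the final round is `β`). -/
def BSMoff (Dem : B → (ι → ℝ) → Finset ι → Finset ι) (N : List B) (r : B → ℕ)
    (b : ℕ → ℝ) (β : ℕ) : ℕ → ι → ℕ
  | 0, _ => 0
  | ℓ + 1, e =>
    if e ∈ FPAsold
        (fun i => Dem i fun e' => b (BSMoff Dem N r b β ℓ e' + 2 ^ (β - ℓ - 1)))
        (BSMgroup N r ℓ) Finset.univ
    then BSMoff Dem N r b β ℓ e + 2 ^ (β - ℓ - 1)
    else BSMoff Dem N r b β ℓ e

/-- The price vector used in round `ℓ` of the binary search mechanism: for `ℓ < β` the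
middle entry of the remaining block of candidate prices, and for the final round `β`
the unique remaining candidate price. -/
def BSMprice (Dem : B → (ι → ℝ) → Finset ι → Finset ι) (N : List B) (r : B → ℕ)
    (b : ℕ → ℝ) (β ℓ : ℕ) : ι → ℝ :=
  fun e =>
    if ℓ < β then b (BSMoff Dem N r b β ℓ e + 2 ^ (β - ℓ - 1))
    else b (BSMoff Dem N r b β β e)

/-- The bundle received by bidder `i` in the final allocation of the binary search
mechanism when the final allocation round is `ℓstar`. -/
def BSMfinalAlloc (Dem : B → (ι → ℝ) → Finset ι → Finset ι) (N : List B) (r : B → ℕ)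
    (b : ℕ → ℝ) (β ℓstar : ℕ) (i : B) : Finset ι :=
  FPAalloc (fun j => Dem j (BSMprice Dem N r b β ℓstar)) (BSMgroup N r ℓstar) Finset.univ i

/-- The welfare of the final allocation of the binary search mechanism. -/
def BSMwelfare (v : B → Finset ι → ℝ) (Dem : B → (ι → ℝ) → Finset ι → Finset ι)
    (N : List B) (r : B → ℕ) (b : ℕ → ℝ) (β ℓstar : ℕ) : ℝ :=
  ((BSMgroup N r ℓstar).map fun i => v i (BSMfinalAlloc Dem N r b β ℓstar i)).sum

/-- The set of items sold in the fixed price auction of round `ℓ`. -/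
def BSMsold (Dem : B → (ι → ℝ) → Finset ι → Finset ι) (N : List B) (r : B → ℕ)
    (b : ℕ → ℝ) (β ℓ : ℕ) : Finset ι :=
  FPAsold (fun j => Dem j (BSMprice Dem N r b β ℓ)) (BSMgroup N r ℓ) Finset.univ

/-- The revenue obtained from the items of `S` in the final allocation (round `ℓstar`). -/
def BSMrev (Dem : B → (ι → ℝ) → Finset ι → Finset ι) (N : List B) (r : B → ℕ)
    (b : ℕ → ℝ) (β : ℕ) (S : Finset ι) (ℓstar : ℕ) : ℝ :=
  priceOf (BSMprice Dem N r b β ℓstar) (S ∩ BSMsold Dem N r b β ℓstar)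

/-- The utility of bidder `i` in the final allocation (zero if `i` does not take part in
the fixed price auction that produced the final allocation). -/
def BSMutility (v : B → Finset ι → ℝ) (Dem : B → (ι → ℝ) → Finset ι → Finset ι)
    (N : List B) (r : B → ℕ) (b : ℕ → ℝ) (β : ℕ) (i : B) (ℓstar : ℕ) : ℝ :=
  if r i = ℓstar then
    v i (BSMfinalAlloc Dem N r b β ℓstar i)
      - priceOf (BSMprice Dem N r b β ℓstar) (BSMfinalAlloc Dem N r b β ℓstar i)
  else 0

open scoped Classical

/-- Item `e` is *oversold* at round `ℓ` (w.r.t. the intended prices `q`): it is allocated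
in the round-`ℓ` fixed price auction although its round-`ℓ` price exceeds `q e`. -/
def OverAt (Dem : B → (ι → ℝ) → Finset ι → Finset ι) (N : List B) (r : B → ℕ)
    (b : ℕ → ℝ) (β : ℕ) (q : ι → ℝ) (ℓ : ℕ) (e : ι) : Prop :=
  e ∈ BSMsold Dem N r b β ℓ ∧ q e < BSMprice Dem N r b β ℓ e

/-- Item `e` is *undersold* at round `ℓ`: it is not allocated in the round-`ℓ` fixed
price auction although its round-`ℓ` price is at most `q e`. -/
def UnderAt (Dem : B → (ι → ℝ) → Finset ι → Finset ι) (N : List B) (r : B → ℕ)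
    (b : ℕ → ℝ) (β : ℕ) (q : ι → ℝ) (ℓ : ℕ) (e : ι) : Prop :=
  e ∉ BSMsold Dem N r b β ℓ ∧ BSMprice Dem N r b β ℓ e ≤ q e

/-- `O_ℓ`: the items of `Sstar` for which `ℓ` is the smallest round at which they are
allocated at a price exceeding their intended price. -/
noncomputable def Oset (Dem : B → (ι → ℝ) → Finset ι → Finset ι) (N : List B) (r : B → ℕ)
    (b : ℕ → ℝ) (β : ℕ) (q : ι → ℝ) (Sstar : Finset ι) (ℓ : ℕ) : Finset ι :=
  Sstar.filter fun e =>
    OverAt Dem N r b β q ℓ e ∧ ∀ ℓ' < ℓ, ¬ OverAt Dem N r b β q ℓ' e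

/-- `U_ℓ`: the items of `Sstar` for which `ℓ` is the smallest round at which they remain
unallocated at a price of at most their intended price. -/
noncomputable def Uset (Dem : B → (ι → ℝ) → Finset ι → Finset ι) (N : List B) (r : B → ℕ)
    (b : ℕ → ℝ) (β : ℕ) (q : ι → ℝ) (Sstar : Finset ι) (ℓ : ℕ) : Finset ι :=
  Sstar.filter fun e =>
    UnderAt Dem N r b β q ℓ e ∧ ∀ ℓ' < ℓ, ¬ UnderAt Dem N r b β q ℓ' e

/-- `C`: the items of `Sstar` whose final (round `β`) price equals their intended price. -/
noncomputable def Cset (Dem : B → (ι → ℝ) → Finset ι → Finset ι) (N : List B) (r : B → ℕ)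
    (b : ℕ → ℝ) (β : ℕ) (q : ι → ℝ) (Sstar : Finset ι) : Finset ι :=
  Sstar.filter fun e => BSMprice Dem N r b β β e = q e

/-- `D`: the items of `C` that, in the final-round fixed price auction, are allocated to
bidders satisfying `P` (the bidders preceding the distinguished bidder in the order of
`N`; these form a prefix of the final group). -/
noncomputable def Dset (Dem : B → (ι → ℝ) → Finset ι → Finset ι) (N : List B) (r : B → ℕ)
    (b : ℕ → ℝ) (β : ℕ) (q : ι → ℝ) (Sstar : Finset ι) (P : B → Prop) : Finset ι :=
  (Cset Dem N r b β q Sstar).filter fun e =>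
    e ∈ FPAsold (fun j => Dem j (BSMprice Dem N r b β β))
        ((BSMgroup N r β).filter fun j => P j) Finset.univ

/-- `T = O_1 ∪ ⋯ ∪ O_β ∪ D`. -/
noncomputable def Tset (Dem : B → (ι → ℝ) → Finset ι → Finset ι) (N : List B) (r : B → ℕ)
    (b : ℕ → ℝ) (β : ℕ) (q : ι → ℝ) (Sstar : Finset ι) (P : B → Prop) : Finset ι :=
  (Finset.range β).biUnion (Oset Dem N r b β q Sstar) ∪ Dset Dem N r b β q Sstar P

section Aux
variable {ι : Type} [Fintype ι] [DecidableEq ι] {B : Type} [DecidableEq B]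

lemma sdiff_sdiff_eq (R X Y : Finset ι) : (R \ X) \ Y = R \ (X ∪ Y) := by
  ext x; simp only [Finset.mem_sdiff, Finset.mem_union]; tauto

lemma fpa_sold_append (Dem : B → Finset ι → Finset ι) (L₁ L₂ : List B) (R : Finset ι) :
    FPAsold Dem (L₁ ++ L₂) R =
      FPAsold Dem L₁ R ∪ FPAsold Dem L₂ (R \ FPAsold Dem L₁ R) := by
  induction L₁ generalizing R with
  | nil => simp [FPAsold]
  | cons j L ih =>
      simp only [List.cons_append, List.append_eq, FPAsold, ih, Finset.union_assoc, sdiff_sdiff_eq]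

lemma fpa_alloc_append (Dem : B → Finset ι → Finset ι) (L₁ L₂ : List B) (R : Finset ι)
    (i : B) (hi : i ∉ L₁) :
    FPAalloc Dem (L₁ ++ L₂) R i = FPAalloc Dem L₂ (R \ FPAsold Dem L₁ R) i := by
  induction L₁ generalizing R with
  | nil => simp [FPAsold]
  | cons j L ih =>
      simp only [List.mem_cons, not_or] at hi
      simp only [List.cons_append, List.append_eq, FPAalloc, FPAsold, if_neg hi.1, ih _ hi.2, sdiff_sdiff_eq]

lemma fpa_sold_prefix (Dem : B → Finset ι → Finset ι) (L₁ L₂ : List B) (R : Finset ι) :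
    FPAsold Dem L₁ R ⊆ FPAsold Dem (L₁ ++ L₂) R := by
  rw [fpa_sold_append]; exact Finset.subset_union_left

/-- split a sorted list's filter at pivot `i₀`. -/
lemma filter_split_lt {α : Type} [LinearOrder α] (i₀ : α) (p : α → Bool) (l : List α)
    (hl : l.Pairwise (· < ·)) :
    l.filter p = l.filter (fun j => p j && decide (j < i₀))
      ++ l.filter (fun j => p j && !decide (j < i₀)) := by
  induction l with
  | nil => simp
  | cons a l ih =>
      obtain ⟨ha, hl'⟩ := List.pairwise_cons.1 hl
      by_cases hai : a < i₀
      · simp only [List.filter_cons, hai, decide_true, Bool.and_true, Bool.not_true,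
          Bool.and_false]
        cases hpa : p a <;> simp [hpa, ih hl', List.filter_cons]
      · have h2 : List.filter (fun j => p j && decide (j < i₀)) (a :: l) = [] := by
          rw [List.filter_eq_nil_iff]
          intro x hx
          rcases List.mem_cons.1 hx with rfl | hx
          · simp [hai]
          · have : ¬ x < i₀ := fun h => hai (lt_trans (ha x hx) h)
            simp [this]
        rw [h2, List.nil_append]
        apply List.filter_congr
        intro x hx
        have : ¬ x < i₀ := by
          rcases List.mem_cons.1 hx with rfl | hx
          · exact hai
          · exact fun h => hai (lt_trans (ha x hx) h)
        simp [this]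

lemma filter_head_pivot {α : Type} [LinearOrder α] (i₀ : α) (p : α → Bool) (l : List α)
    (hl : l.Pairwise (· < ·)) (hi : i₀ ∈ l) (hp : p i₀ = true) :
    l.filter (fun j => p j && !decide (j < i₀))
      = i₀ :: l.filter (fun j => p j && decide (i₀ < j)) := by
  induction l with
  | nil => simp at hi
  | cons a l ih =>
      obtain ⟨ha, hl'⟩ := List.pairwise_cons.1 hl
      by_cases hai : a = i₀
      · subst hai
        have hc1 : (p a && !decide (a < a)) = true := by simp [hp]
        have hc2 : (p a && decide (a < a)) = false := by simp
        rw [List.filter_cons, List.filter_cons, if_pos hc1, if_neg (by simp [hc2])]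
        congr 1
        apply List.filter_congr
        intro x hx
        have h1 : a < x := ha x hx
        simp [h1, not_lt.2 h1.le]
      · have hil : i₀ ∈ l := by
          rcases List.mem_cons.1 hi with h | h
          · exact absurd h.symm hai
          · exact h
        have hlt : a < i₀ := ha i₀ hil
        have h1 : (p a && !decide (a < i₀)) = false := by simp [hlt]
        have h2 : (p a && decide (i₀ < a)) = false := by simp [not_lt.2 hlt.le]
        simp only [List.filter_cons, h1, h2, if_neg Bool.false_ne_true]
        exact ih hl' hil
end Aux
lemma bsm_price_lt (Dem : B → (ι → ℝ) → Finset ι → Finset ι) (N : List B) (r : B → ℕ)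
    (b : ℕ → ℝ) (β t : ℕ) (ht : t < β) :
    BSMprice Dem N r b β t = fun e => b (BSMoff Dem N r b β t e + 2 ^ (β - t - 1)) := by
  funext e; simp only [BSMprice, if_pos ht]

lemma bsm_off_succ (Dem : B → (ι → ℝ) → Finset ι → Finset ι) (N : List B) (r : B → ℕ)
    (b : ℕ → ℝ) (β t : ℕ) (ht : t < β) :
    BSMoff Dem N r b β (t + 1) = fun e =>
      if e ∈ BSMsold Dem N r b β t then BSMoff Dem N r b β t e + 2 ^ (β - t - 1)
      else BSMoff Dem N r b β t e := by
  funext e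
  simp only [BSMoff, BSMsold, bsm_price_lt Dem N r b β t ht]

lemma bsm_off_couple (Dem : B → (ι → ℝ) → Finset ι → Finset ι) (N N' : List B)
    (r r' : B → ℕ) (b : ℕ → ℝ) (β s : ℕ)
    (hg : ∀ u < s, BSMgroup N r u = BSMgroup N' r' u) :
    BSMoff Dem N r b β s = BSMoff Dem N' r' b β s := by
  induction s with
  | zero => funext e; simp [BSMoff]
  | succ t ih =>
      have ih' := ih fun u hu => hg u (Nat.lt_succ_of_lt hu)
      funext e
      simp only [BSMoff, ih', hg t (Nat.lt_succ_self t)]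

lemma bsm_price_couple (Dem : B → (ι → ℝ) → Finset ι → Finset ι) (N N' : List B)
    (r r' : B → ℕ) (b : ℕ → ℝ) (β t : ℕ) (ht : t ≤ β)
    (hg : ∀ u < t, BSMgroup N r u = BSMgroup N' r' u) :
    BSMprice Dem N r b β t = BSMprice Dem N' r' b β t := by
  funext e
  by_cases h : t < β
  · simp only [BSMprice, if_pos h, bsm_off_couple Dem N N' r r' b β t hg]
  · have hβ : t = β := le_antisymm ht (not_lt.1 h)
    subst hβ
    simp only [BSMprice, if_neg h, bsm_off_couple Dem N N' r r' b t t hg]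

lemma bsm_binsearch_exact (Dem : B → (ι → ℝ) → Finset ι → Finset ι) (N : List B)
    (r : B → ℕ) (b : ℕ → ℝ) (β : ℕ) (q : ι → ℝ)
    (hbmono : ∀ j k : ℕ, j < k → k < 2 ^ β → b j < b k) (e : ι) (j : ℕ)
    (hj : j < 2 ^ β) (hbj : b j = q e)
    (h : ∀ t < β, ¬ OverAt Dem N r b β q t e ∧ ¬ UnderAt Dem N r b β q t e) :
    BSMprice Dem N r b β β e = q e := by
  have key : ∀ t, t ≤ β → BSMoff Dem N r b β t e ≤ j ∧
      j < BSMoff Dem N r b β t e + 2 ^ (β - t) ∧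
      BSMoff Dem N r b β t e + 2 ^ (β - t) ≤ 2 ^ β := by
    intro t
    induction t with
    | zero => intro _; simp [BSMoff]; omega
    | succ t ih =>
        intro ht1
        have htβ : t < β := ht1
        obtain ⟨h1, h2, h3⟩ := ih htβ.le
        set o := BSMoff Dem N r b β t e with ho
        have hsplit : 2 ^ (β - t) = 2 ^ (β - t - 1) + 2 ^ (β - t - 1) := by
          have h5 : β - t - 1 + 1 = β - t := by omega
          calc 2 ^ (β - t) = 2 ^ (β - t - 1 + 1) := by rw [h5]
            _ = 2 ^ (β - t - 1) * 2 := pow_succ 2 _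
            _ = 2 ^ (β - t - 1) + 2 ^ (β - t - 1) := by omega
        have hmid_lt : o + 2 ^ (β - t - 1) < 2 ^ β := by
          have hpos : 0 < 2 ^ (β - t - 1) := Nat.pow_pos (by norm_num)
          omega
        have hβt1 : β - (t + 1) = β - t - 1 := by omega
        have hpow : 2 ^ (β - (t + 1)) = 2 ^ (β - t - 1) := by rw [hβt1]
        simp only [bsm_off_succ Dem N r b β t htβ]
        by_cases hs : e ∈ BSMsold Dem N r b β t
        · have hple : b (o + 2 ^ (β - t - 1)) ≤ q e := by
            by_contra hlt
            exact (h t htβ).1 ⟨hs, by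
              rw [bsm_price_lt Dem N r b β t htβ]; exact lt_of_not_ge hlt⟩
          have hmj : o + 2 ^ (β - t - 1) ≤ j := by
            by_contra hc
            push_neg at hc
            have := hbmono j (o + 2 ^ (β - t - 1)) hc hmid_lt
            rw [hbj] at this; linarith
          simp only [if_pos hs]
          omega
        · have hqlt : q e < b (o + 2 ^ (β - t - 1)) := by
            by_contra hle
            exact (h t htβ).2 ⟨hs, by
              rw [bsm_price_lt Dem N r b β t htβ]; exact not_lt.1 hle⟩
          have hmj : j < o + 2 ^ (β - t - 1) := by
            by_contra hc
            push_neg at hc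
            rcases eq_or_lt_of_le hc with hEq | hlt
            · rw [hEq, hbj] at hqlt; linarith
            · have := hbmono (o + 2 ^ (β - t - 1)) j hlt hj
              rw [hbj] at this; linarith
          simp only [if_neg hs]
          omega
  obtain ⟨h1, h2, _⟩ := key β le_rfl
  have hjeq : BSMoff Dem N r b β β e = j := by simp at h2; omega
  simp only [BSMprice]
  rw [if_neg (lt_irrefl β), hjeq, hbj]

lemma subadd_biUnion {v : Finset ι → ℝ} (hv0 : v ∅ = 0) (hs : SubadditiveVal v)
    (s : Finset ℕ) (f : ℕ → Finset ι) :
    v (s.biUnion f) ≤ ∑ t ∈ s, v (f t) := by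
  classical
  induction s using Finset.induction_on with
  | empty => simp [hv0]
  | @insert a s ha ih =>
      rw [Finset.biUnion_insert, Finset.sum_insert ha]
      calc v (f a ∪ s.biUnion f) ≤ v (f a) + v (s.biUnion f) := hs _ _
        _ ≤ v (f a) + ∑ t ∈ s, v (f t) := by linarith
lemma first_bad {Q : ℕ → Prop} [DecidablePred Q] {β : ℕ} (h : ∃ t, t < β ∧ Q t) :
    ∃ t, t < β ∧ Q t ∧ ∀ u < t, ¬ Q u := by
  classical
  have h' : ∃ t, t < β ∧ Q t := h
  refine ⟨Nat.find h', (Nat.find_spec h').1, (Nat.find_spec h').2, fun u hu hQu => ?_⟩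
  exact Nat.find_min h' hu ⟨lt_trans hu (Nat.find_spec h').1, hQu⟩

lemma bsm_group_couple {n : ℕ} (i₀ : Fin n) (r r' : Fin n → ℕ) (u : ℕ)
    (h₀ : r i₀ ≠ u) (h : ∀ j, j ≠ i₀ → r j = r' j) :
    BSMgroup (List.finRange n) r u
      = BSMgroup ((List.finRange n).filter fun j => j ≠ i₀) r' u := by
  unfold BSMgroup
  rw [List.filter_filter]
  apply List.filter_congr
  intro j _
  by_cases hj : j = i₀
  · subst hj; simp [h₀]
  · simp [hj, h j hj]
/-- **Claim 4.3** (utility lower bound).  Same setup as Claim 4.2: the sets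
`C, O_ℓ, U_ℓ, D, T` are defined from the run of `BinarySearchMechanism(N \ {i₀}, M, ψ)`
with the fixed rounds `rminus`, `D` using the bidders preceding `i₀` in the order of `N`.
If the valuation of bidder `i₀` is subadditive, then for every `S ⊆ Sstar`, in the actual
mechanism (with bidder `i₀` included, i.e. with round assignment
`Function.update rminus i₀ ri`), the expectation over `r_{i₀}` and `r*` of bidder `i₀`'s
utility in the fixed price auction producing the final allocation is at least
`(1/(β+1)²)·(v_{i₀}(S \ T) − q(S \ T))`. -/
theorem claim_utility_lower_bound
    {ι : Type} [Fintype ι] [DecidableEq ι] (n β : ℕ) (ψ : ℝ)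
    (v : Fin n → Finset ι → ℝ)
    (Dem : Fin n → (ι → ℝ) → Finset ι → Finset ι)
    (b : ℕ → ℝ) (q : ι → ℝ) (Sstar : Finset ι) (i₀ : Fin n)
    (rminus : Fin n → Fin (β + 1))
    (hm : 2 ≤ Fintype.card ι)
    (hval : ∀ i, IsValuation (v i))
    (hsub : SubadditiveVal (v i₀))
    (hψpos : 0 < ψ)
    (hβ : 1 ≤ β)
    (hbmono : ∀ j k : ℕ, j < k → k < 2 ^ β → b j < b k)
    (hbnn : ∀ j < 2 ^ β, 0 ≤ b j)
    (hbB : ∀ x ∈ candB (Fintype.card ι) ψ, ∃ j < 2 ^ β, b j = x)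
    (hq : ∀ e ∈ Sstar, ∃ j < 2 ^ β, b j = q e)
    (hDem : ∀ i p, IsDemandOracle (v i) p (Dem i p)) :
    ∀ S ⊆ Sstar,
      (((β : ℝ) + 1) ^ 2)⁻¹ *
          ∑ ri : Fin (β + 1), ∑ rs : Fin (β + 1),
            BSMutility v Dem (List.finRange n)
              (fun j => ((Function.update rminus i₀ ri) j : ℕ)) b β i₀ (rs : ℕ)
        ≥ (((β : ℝ) + 1) ^ 2)⁻¹ *
            (v i₀ (S \ Tset Dem ((List.finRange n).filter fun j => j ≠ i₀)
                (fun j => (rminus j : ℕ)) b β q Sstar (fun j => j < i₀))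
              - priceOf q (S \ Tset Dem ((List.finRange n).filter fun j => j ≠ i₀)
                (fun j => (rminus j : ℕ)) b β q Sstar (fun j => j < i₀))) := by
  intro S hS
  classical
  set N' : List (Fin n) := (List.finRange n).filter (fun j => j ≠ i₀) with hN'
  set r' : Fin n → ℕ := fun j => (rminus j : ℕ) with hr'
  set T : Finset ι := Tset Dem N' r' b β q Sstar (fun j => j < i₀) with hT
  set W : Finset ι := S \ T with hW
  set U : ℕ → Finset ι := fun t => Uset Dem N' r' b β q Sstar t with hU
  set P : ℕ → Finset ι := fun t =>
    if t < β then W ∩ U t else W \ (Finset.range β).biUnion U with hP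
  have hPW : ∀ t, P t ⊆ W := by
    intro t
    simp only [hP]
    split
    · exact Finset.inter_subset_left
    · exact Finset.sdiff_subset
  have hWP : W = (Finset.range (β + 1)).biUnion P := by
    apply Finset.Subset.antisymm
    · intro e he
      rw [Finset.mem_biUnion]
      by_cases hcase : ∃ t, t < β ∧ e ∈ U t
      · obtain ⟨t, ht, het⟩ := hcase
        refine ⟨t, Finset.mem_range.2 (Nat.lt_succ_of_lt ht), ?_⟩
        simp only [hP]
        rw [if_pos ht]
        exact Finset.mem_inter.2 ⟨he, het⟩
      · push_neg at hcase
        refine ⟨β, Finset.mem_range.2 (Nat.lt_succ_self β), ?_⟩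
        simp only [hP]
        rw [if_neg (lt_irrefl β)]
        refine Finset.mem_sdiff.2 ⟨he, fun hmem => ?_⟩
        obtain ⟨t, ht, het⟩ := Finset.mem_biUnion.1 hmem
        exact hcase t (Finset.mem_range.1 ht) het
    · intro e he
      obtain ⟨t, _, het⟩ := Finset.mem_biUnion.1 he
      exact hPW t het
  have hUdis : ∀ t u : ℕ, t < u → Disjoint (U t) (U u) := by
    intro t u htu
    rw [Finset.disjoint_left]
    intro e het heu
    simp only [hU, Uset, Finset.mem_filter] at het heu
    exact heu.2.2 t htu het.2.1
  have hpd : (↑(Finset.range (β + 1)) : Set ℕ).PairwiseDisjoint P := by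
    have key : ∀ t u, t < u → u ≤ β → Disjoint (P t) (P u) := by
      intro t u htu huβ
      by_cases hu : u < β
      · have ht : t < β := lt_trans htu hu
        simp only [hP]
        rw [if_pos ht, if_pos hu]
        exact Finset.disjoint_of_subset_left Finset.inter_subset_right
          (Finset.disjoint_of_subset_right Finset.inter_subset_right (hUdis t u htu))
      · have ht : t < β := lt_of_lt_of_le htu huβ
        simp only [hP]
        rw [if_pos ht, if_neg hu]
        rw [Finset.disjoint_right]
        intro e heu het
        exact (Finset.mem_sdiff.1 heu).2
          (Finset.mem_biUnion.2 ⟨t, Finset.mem_range.2 ht, (Finset.mem_inter.1 het).2⟩)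
    intro t htmem u humem htu
    have ht' := Finset.mem_range.1 (Finset.mem_coe.1 htmem)
    have hu' := Finset.mem_range.1 (Finset.mem_coe.1 humem)
    rcases lt_or_gt_of_ne htu with h | h
    · exact key t u h (Nat.lt_succ_iff.1 hu')
    · exact (key u t h (Nat.lt_succ_iff.1 ht')).symm
  have hqsum : priceOf q W = ∑ t ∈ Finset.range (β + 1), priceOf q (P t) := by
    rw [hWP]
    simp only [priceOf]
    exact Finset.sum_biUnion hpd
  have hvsum : v i₀ W ≤ ∑ t ∈ Finset.range (β + 1), v i₀ (P t) := by
    rw [hWP]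
    exact subadd_biUnion (hval i₀).1 hsub _ _
  have hsorted : (List.finRange n).Pairwise (· < ·) := List.pairwise_lt_finRange n
  -- per-round utility bound
  have hround : ∀ rv : Fin (β + 1),
      v i₀ (P (rv : ℕ)) - priceOf q (P (rv : ℕ)) ≤
        BSMutility v Dem (List.finRange n)
          (fun j => ((Function.update rminus i₀ rv) j : ℕ)) b β i₀ (rv : ℕ) := by
    intro rv
    set t : ℕ := (rv : ℕ) with htdef
    have htle : t ≤ β := Nat.lt_succ_iff.1 rv.isLt
    set rfun : Fin n → ℕ := fun j => ((Function.update rminus i₀ rv) j : ℕ) with hrfun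
    have hri : rfun i₀ = t := by simp [hrfun, Function.update_self, htdef]
    have hrj : ∀ j, j ≠ i₀ → rfun j = r' j := by
      intro j hj
      simp [hrfun, hr', Function.update_of_ne hj]
    have hgs : ∀ u, u ≠ t → BSMgroup (List.finRange n) rfun u = BSMgroup N' r' u := by
      intro u hu
      rw [hN']
      exact bsm_group_couple i₀ rfun r' u (by rw [hri]; exact hu.symm) hrj
    have hg2 : ∀ u, u < t → BSMgroup (List.finRange n) rfun u = BSMgroup N' r' u :=
      fun u hu => hgs u (Nat.ne_of_lt hu)
    have hprice : BSMprice Dem (List.finRange n) rfun b β t = BSMprice Dem N' r' b β t :=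
      bsm_price_couple Dem (List.finRange n) N' rfun r' b β t htle hg2
    set p : ι → ℝ := BSMprice Dem N' r' b β t with hpdef
    have hpi : (fun j => decide (rfun j = t)) i₀ = true := by simp [hri]
    set A : List (Fin n) :=
      (List.finRange n).filter (fun j => decide (rfun j = t) && decide (j < i₀)) with hA
    set Acan : List (Fin n) :=
      (List.finRange n).filter (fun j => decide (r' j = t) && decide (j < i₀)) with hAcan
    have hAeq : A = Acan := by
      rw [hA, hAcan]
      apply List.filter_congr
      intro j _
      by_cases hj : j < i₀
      · have hne : j ≠ i₀ := ne_of_lt hj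
        simp [hj, hrj j hne]
      · simp [hj]
    have hGsplit : BSMgroup (List.finRange n) rfun t
        = A ++ i₀ :: (List.finRange n).filter
            (fun j => decide (rfun j = t) && decide (i₀ < j)) := by
      show (List.finRange n).filter (fun j => decide (rfun j = t)) = _
      rw [filter_split_lt i₀ (fun j => decide (rfun j = t)) (List.finRange n) hsorted,
        filter_head_pivot i₀ (fun j => decide (rfun j = t)) (List.finRange n) hsorted
          (List.mem_finRange i₀) hpi]
    have hiA : i₀ ∉ A := by
      rw [hA]
      intro hmem
      have := List.of_mem_filter hmem
      simp at this
    set R₀ : Finset ι := Finset.univ \ FPAsold (fun j => Dem j p) Acan Finset.univ with hR₀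
    have halloc : BSMfinalAlloc Dem (List.finRange n) rfun b β t i₀ = Dem i₀ p R₀ := by
      unfold BSMfinalAlloc
      rw [hprice, hGsplit, fpa_alloc_append _ _ _ _ _ hiA, hAeq]
      simp [FPAalloc, hR₀]
    have hut : BSMutility v Dem (List.finRange n) rfun b β i₀ t
        = v i₀ (Dem i₀ p R₀) - priceOf p (Dem i₀ p R₀) := by
      unfold BSMutility
      rw [if_pos hri, halloc, hprice]
    obtain ⟨hDsub, hDopt⟩ := hDem i₀ p R₀
    -- the canonical prefix of the run-without-i₀ group
    have hG' : BSMgroup N' r' t = Acan ++ (List.finRange n).filter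
        (fun j => (decide (r' j = t) && decide (j ≠ i₀)) && !decide (j < i₀)) := by
      rw [hN']
      show ((List.finRange n).filter (fun j => decide (j ≠ i₀))).filter
          (fun j => decide (r' j = t)) = _
      rw [List.filter_filter,
        filter_split_lt i₀ (fun j => decide (r' j = t) && decide (j ≠ i₀))
          (List.finRange n) hsorted]
      congr 1
      rw [hAcan]
      apply List.filter_congr
      intro j _
      by_cases hj : j < i₀
      · have hne : j ≠ i₀ := ne_of_lt hj
        simp [hj, hne]
      · simp [hj]
    have hsold_eq : BSMsold Dem N' r' b β t
        = FPAsold (fun j => Dem j p) (BSMgroup N' r' t) Finset.univ := by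
      rw [hpdef]; rfl
    have hsub2 : FPAsold (fun j => Dem j p) Acan Finset.univ ⊆ BSMsold Dem N' r' b β t := by
      rw [hsold_eq, hG']
      exact fpa_sold_prefix _ _ _ _
    -- availability and price bound on P t
    have hPt : P t ⊆ R₀ ∧ ∀ e ∈ P t, p e ≤ q e := by
      by_cases hcase : t < β
      · have hmemU : ∀ e ∈ P t, e ∈ U t := by
          intro e he
          simp only [hP] at he
          rw [if_pos hcase] at he
          exact (Finset.mem_inter.1 he).2
        have hunder : ∀ e ∈ P t, UnderAt Dem N' r' b β q t e := by
          intro e he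
          have heU := hmemU e he
          simp only [hU, Uset, Finset.mem_filter] at heU
          exact heU.2.1
        constructor
        · intro e he
          rw [hR₀]
          refine Finset.mem_sdiff.2 ⟨Finset.mem_univ e, fun hsold => ?_⟩
          exact (hunder e he).1 (hsub2 hsold)
        · intro e he
          have := (hunder e he).2
          rw [hpdef]
          exact this
      · have htβ : t = β := le_antisymm htle (not_lt.1 hcase)
        have hPe : ∀ e ∈ P t, e ∈ W ∧ e ∉ (Finset.range β).biUnion U := by
          intro e he
          simp only [hP] at he
          rw [if_neg hcase] at he
          exact Finset.mem_sdiff.1 he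
        have hkey : ∀ e ∈ P t, e ∈ Cset Dem N' r' b β q Sstar ∧
            e ∉ Dset Dem N' r' b β q Sstar (fun j => j < i₀) := by
          intro e he
          obtain ⟨heW, heU⟩ := hPe e he
          have heST := Finset.mem_sdiff.1 (by rw [hW] at heW; exact heW)
          have heS : e ∈ S := heST.1
          have heT : e ∉ T := by rw [hT]; exact heST.2
          have heSstar : e ∈ Sstar := hS heS
          have hnoOver : ∀ u < β, ¬ OverAt Dem N' r' b β q u e := by
            intro u hu hO
            obtain ⟨u', hu', hO', hmin⟩ :=
              first_bad (Q := fun u => OverAt Dem N' r' b β q u e) ⟨u, hu, hO⟩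
            have hmem : e ∈ Oset Dem N' r' b β q Sstar u' :=
              Finset.mem_filter.2 ⟨heSstar, hO', fun l' hl' => hmin l' hl'⟩
            apply heT
            rw [hT]
            exact Finset.mem_union_left _
              (Finset.mem_biUnion.2 ⟨u', Finset.mem_range.2 hu', hmem⟩)
          have hnoUnder : ∀ u < β, ¬ UnderAt Dem N' r' b β q u e := by
            intro u hu hUn
            obtain ⟨u', hu', hU', hmin⟩ :=
              first_bad (Q := fun u => UnderAt Dem N' r' b β q u e) ⟨u, hu, hUn⟩
            have hmem : e ∈ U u' := by
              simp only [hU, Uset]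
              exact Finset.mem_filter.2 ⟨heSstar, hU', fun l' hl' => hmin l' hl'⟩
            exact heU (Finset.mem_biUnion.2 ⟨u', Finset.mem_range.2 hu', hmem⟩)
          obtain ⟨j, hj, hbj⟩ := hq e heSstar
          have hqe : BSMprice Dem N' r' b β β e = q e :=
            bsm_binsearch_exact Dem N' r' b β q hbmono e j hj hbj
              (fun u hu => ⟨hnoOver u hu, hnoUnder u hu⟩)
          refine ⟨Finset.mem_filter.2 ⟨heSstar, hqe⟩, fun hD => ?_⟩
          apply heT
          rw [hT]
          exact Finset.mem_union_right _ hD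
        constructor
        · intro e he
          rw [hR₀]
          refine Finset.mem_sdiff.2 ⟨Finset.mem_univ e, fun hsold => ?_⟩
          obtain ⟨heC, heD⟩ := hkey e he
          apply heD
          simp only [Dset]
          refine Finset.mem_filter.2 ⟨heC, ?_⟩
          convert hsold using 2
          · rw [hpdef, htβ]
          · rw [hAcan, htβ, hN']
            show List.filter _ (((List.finRange n).filter
              (fun j => decide (j ≠ i₀))).filter (fun j => decide (r' j = β))) = _
            rw [List.filter_filter, List.filter_filter]
            apply List.filter_congr
            intro j _
            by_cases hj : j < i₀
            · have hne : j ≠ i₀ := ne_of_lt hj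
              simp [hj, hne]
            · simp [hj]
        · intro e he
          obtain ⟨heC, -⟩ := hkey e he
          have := (Finset.mem_filter.1 heC).2
          rw [hpdef, htβ, this]
    have hprice_le : priceOf p (P t) ≤ priceOf q (P t) :=
      Finset.sum_le_sum fun e he => hPt.2 e he
    calc v i₀ (P t) - priceOf q (P t)
        ≤ v i₀ (P t) - priceOf p (P t) := by linarith
      _ ≤ v i₀ (Dem i₀ p R₀) - priceOf p (Dem i₀ p R₀) := hDopt (P t) hPt.1
      _ = BSMutility v Dem (List.finRange n) rfun b β i₀ t := hut.symm
  -- collapse the inner sum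
  have hcollapse : ∀ rv : Fin (β + 1),
      ∑ rs : Fin (β + 1), BSMutility v Dem (List.finRange n)
          (fun j => ((Function.update rminus i₀ rv) j : ℕ)) b β i₀ (rs : ℕ)
        = BSMutility v Dem (List.finRange n)
            (fun j => ((Function.update rminus i₀ rv) j : ℕ)) b β i₀ (rv : ℕ) := by
    intro rv
    apply Finset.sum_eq_single_of_mem rv (Finset.mem_univ rv)
    intro rs _ hne
    unfold BSMutility
    rw [if_neg]
    simp only [Function.update_self]
    exact fun h => hne (Fin.ext h.symm)
  have hsum_eq : (∑ ri : Fin (β + 1), ∑ rs : Fin (β + 1),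
        BSMutility v Dem (List.finRange n)
          (fun j => ((Function.update rminus i₀ ri) j : ℕ)) b β i₀ (rs : ℕ))
      = ∑ ri : Fin (β + 1), BSMutility v Dem (List.finRange n)
          (fun j => ((Function.update rminus i₀ ri) j : ℕ)) b β i₀ (ri : ℕ) :=
    Finset.sum_congr rfl fun rv _ => hcollapse rv
  have hchain : v i₀ W - priceOf q W ≤ ∑ ri : Fin (β + 1),
      BSMutility v Dem (List.finRange n)
        (fun j => ((Function.update rminus i₀ ri) j : ℕ)) b β i₀ (ri : ℕ) := by
    calc v i₀ W - priceOf q W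
        ≤ (∑ t ∈ Finset.range (β + 1), v i₀ (P t))
            - ∑ t ∈ Finset.range (β + 1), priceOf q (P t) := by
          rw [← hqsum]; linarith
      _ = ∑ t ∈ Finset.range (β + 1), (v i₀ (P t) - priceOf q (P t)) := by
          rw [Finset.sum_sub_distrib]
      _ = ∑ rv : Fin (β + 1), (v i₀ (P (rv : ℕ)) - priceOf q (P (rv : ℕ))) :=
          (Fin.sum_univ_eq_sum_range (fun t => v i₀ (P t) - priceOf q (P t)) (β + 1)).symm
      _ ≤ _ := Finset.sum_le_sum fun rv _ => hround rv
  rw [ge_iff_le, hsum_eq]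
  exact mul_le_mul_of_nonneg_left hchain (by positivity)
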